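/- Let 0 < ε < π/4 and let u₂, v₂, u₄, v₄ ∈ ℝ² be points such that u₂, v₂, u₄ are pairwise distinct and u₂, u₄, v₄ are pairwise distinct. Suppose ∠ u₂ v₂ u₄ ≤ ε, |∠ u₂ u₄ v₂ − π/2| ≤ ε, ∠ u₄ u₂ v₄ ≤ ε, and |∠ u₂ v₄ u₄ − π/2| ≤ ε. Then dist(u₄, v₄) ≤ (tan ε)² · dist(u₂, v₂). -/

import Mathlib

open Real EuclideanGeometry

noncomputable section

abbrev Pt : Type := EuclideanSpace ℝ (Fin 2)

lemma lawsin {V : Type*} [NormedAddCommGroup V] [InnerProductSpace ℝ V] (x y : V) (hy : y ≠ 0) :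
    Real.sin (InnerProductGeometry.angle x y) * ‖x‖ =
      Real.sin (InnerProductGeometry.angle y (y - x)) * ‖y - x‖ := by
  have h1 := InnerProductGeometry.sin_angle_mul_norm_mul_norm x y
  have h2 := InnerProductGeometry.sin_angle_mul_norm_mul_norm y (y - x)
  have key : Real.sin (InnerProductGeometry.angle x y) * ‖x‖ * ‖y‖ =
      Real.sin (InnerProductGeometry.angle y (y - x)) * ‖y - x‖ * ‖y‖ := by
    have : (inner ℝ x x * inner ℝ y y - inner ℝ x y * inner ℝ x y : ℝ) =
        inner ℝ y y * inner ℝ (y - x) (y - x) - inner ℝ y (y - x) * inner ℝ y (y - x) := by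
      simp only [inner_sub_left, inner_sub_right]
      rw [real_inner_comm y x]
      ring
    calc Real.sin (InnerProductGeometry.angle x y) * ‖x‖ * ‖y‖
        = Real.sin (InnerProductGeometry.angle x y) * (‖x‖ * ‖y‖) := by ring
      _ = √((inner ℝ x x : ℝ) * inner ℝ y y - inner ℝ x y * inner ℝ x y) := h1
      _ = √((inner ℝ y y : ℝ) * inner ℝ (y - x) (y - x) - inner ℝ y (y - x) * inner ℝ y (y - x)) := by
          rw [this]
      _ = Real.sin (InnerProductGeometry.angle y (y - x)) * (‖y‖ * ‖y - x‖) := h2.symm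
      _ = Real.sin (InnerProductGeometry.angle y (y - x)) * ‖y - x‖ * ‖y‖ := by ring
  exact mul_right_cancel₀ (norm_ne_zero_iff.2 hy) key

lemma key_step (ε : ℝ) (hε0 : 0 < ε) (hε : ε < π / 4) (A B C : EuclideanSpace ℝ (Fin 2))
    (hCA : C ≠ A) (hCB : C ≠ B) (hBA : B ≠ A)
    (hB : ∠ C B A ≤ ε) (hA : |∠ C A B - π / 2| ≤ ε) :
    dist C A ≤ Real.tan ε * dist C B := by
  have hεπ2 : ε < π / 2 := hε.trans (by linarith [pi_pos])
  -- law of sines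
  have hy : (B - A : EuclideanSpace ℝ (Fin 2)) ≠ 0 := sub_ne_zero.2 hBA
  have law := lawsin (C - A) (B - A) hy
  have e1 : InnerProductGeometry.angle (C - A) (B - A) = ∠ C A B := rfl
  have e2 : InnerProductGeometry.angle (B - A) (B - A - (C - A)) = ∠ C B A := by
    rw [EuclideanGeometry.angle_comm]
    show _ = InnerProductGeometry.angle (A - B) (C - B)
    rw [show (B - A - (C - A) : EuclideanSpace ℝ (Fin 2)) = B - C by abel,
      show (B - A : EuclideanSpace ℝ (Fin 2)) = -(A - B) by abel,
      show (B - C : EuclideanSpace ℝ (Fin 2)) = -(C - B) by abel,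
      InnerProductGeometry.angle_neg_neg, InnerProductGeometry.angle_comm]
  have e3 : ‖(C - A : EuclideanSpace ℝ (Fin 2))‖ = dist C A := by
    rw [dist_eq_norm_vsub (EuclideanSpace ℝ (Fin 2))]; rfl
  have e4 : ‖(B - A - (C - A) : EuclideanSpace ℝ (Fin 2))‖ = dist C B := by
    rw [show (B - A - (C - A) : EuclideanSpace ℝ (Fin 2)) = B - C by abel,
      dist_comm, dist_eq_norm_vsub (EuclideanSpace ℝ (Fin 2))]; rfl
  rw [e1, e2, e3, e4] at law
  -- sin bounds
  have hsinA : Real.cos ε ≤ Real.sin (∠ C A B) := by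
    have : Real.sin (∠ C A B) = Real.cos (|π / 2 - ∠ C A B|) := by
      rcases abs_cases (π / 2 - ∠ C A B) with ⟨h, _⟩ | ⟨h, _⟩ <;> rw [h] <;>
        simp [Real.cos_pi_div_two_sub, Real.cos_neg, Real.cos_sub_pi_div_two,
          neg_sub]
    rw [this]
    apply Real.cos_le_cos_of_nonneg_of_le_pi (abs_nonneg _)
    · linarith [pi_pos]
    · rw [abs_sub_comm] at hA; exact hA
  have hsinB : Real.sin (∠ C B A) ≤ Real.sin ε := by
    apply Real.sin_le_sin_of_le_of_le_pi_div_two _ hεπ2.le hB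
    linarith [EuclideanGeometry.angle_nonneg C B A]
  have hcos : 0 < Real.cos ε := Real.cos_pos_of_mem_Ioo ⟨by linarith, hεπ2⟩
  have hsinApos : 0 < Real.sin (∠ C A B) := lt_of_lt_of_le hcos hsinA
  have hdCB : 0 ≤ dist C B := dist_nonneg
  rw [Real.tan_eq_sin_div_cos]
  rw [div_mul_eq_mul_div, le_div_iff₀ hcos]
  calc dist C A * Real.cos ε ≤ dist C A * Real.sin (∠ C A B) :=
        mul_le_mul_of_nonneg_left hsinA dist_nonneg
    _ = Real.sin (∠ C B A) * dist C B := by linarith [law]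
    _ ≤ Real.sin ε * dist C B := mul_le_mul_of_nonneg_right hsinB hdCB

/-- Quantitative shrinking along the caterpillar: if `∠ u₂ v₂ u₄ ≤ ε`,
`∠ u₂ u₄ v₂` is within `ε` of `π/2`, `∠ u₄ u₂ v₄ ≤ ε` and `∠ u₂ v₄ u₄` is
within `ε` of `π/2`, then `dist u₄ v₄ ≤ (tan ε)² · dist u₂ v₂`. -/
theorem stmt10 (ε : ℝ) (hε0 : 0 < ε) (hε : ε < π / 4)
    (u₂ v₂ u₄ v₄ : Pt)
    (h1 : u₂ ≠ v₂) (h2 : u₂ ≠ u₄) (h3 : v₂ ≠ u₄) (h4 : u₂ ≠ v₄) (h5 : u₄ ≠ v₄)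
    (ha1 : ∠ u₂ v₂ u₄ ≤ ε) (ha2 : |∠ u₂ u₄ v₂ - π / 2| ≤ ε)
    (ha3 : ∠ u₄ u₂ v₄ ≤ ε) (ha4 : |∠ u₂ v₄ u₄ - π / 2| ≤ ε) :
    dist u₄ v₄ ≤ (Real.tan ε) ^ 2 * dist u₂ v₂ := by

  have s1 : dist u₂ u₄ ≤ Real.tan ε * dist u₂ v₂ :=
    key_step ε hε0 hε u₄ v₂ u₂ h2 h1 h3 ha1 ha2
  have s2 : dist u₄ v₄ ≤ Real.tan ε * dist u₄ u₂ :=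
    key_step ε hε0 hε v₄ u₂ u₄ h5 h2.symm h4 ha3
      (by rwa [EuclideanGeometry.angle_comm])
  have htan : 0 < Real.tan ε :=
    Real.tan_pos_of_pos_of_lt_pi_div_two hε0 (hε.trans (by linarith [pi_pos]))
  calc dist u₄ v₄ ≤ Real.tan ε * dist u₄ u₂ := s2
    _ = Real.tan ε * dist u₂ u₄ := by rw [dist_comm]
    _ ≤ Real.tan ε * (Real.tan ε * dist u₂ v₂) :=
        mul_le_mul_of_nonneg_left s1 htan.le
    _ = (Real.tan ε) ^ 2 * dist u₂ v₂ := by ring
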